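/- Monotonicity of co-ranks in K: if (i_1,...,i_m) is a co-rank vector at rank K and (j_1,...,j_m) is a co-rank vector at rank K' with K ≤ K', and all values across all sequences are distinct, then i_t ≤ j_t for every t. -/
import Mathlib


open scoped BigOperators Classical

/-- Left boundary value `ℓ_t` of the cut: `L_t[i_t - 1]` if `i_t > 0`, else `⊥` (−∞). -/
noncomputable def lcut {m : ℕ} (n : Fin m → ℕ) (L : ∀ t, Fin (n t) → ℝ)
    (i : Fin m → ℕ) (t : Fin m) : EReal :=
  if h : 0 < i t ∧ i t ≤ n t then ((L t ⟨i t - 1, by omega⟩ : ℝ) : EReal) else ⊥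

/-- Right boundary value `r_t` of the cut: `L_t[i_t]` if `i_t < n_t`, else `⊤` (+∞). -/
noncomputable def rcut {m : ℕ} (n : Fin m → ℕ) (L : ∀ t, Fin (n t) → ℝ)
    (i : Fin m → ℕ) (t : Fin m) : EReal :=
  if h : i t < n t then ((L t ⟨i t, h⟩ : ℝ) : EReal) else ⊤

/-- monotonicity of co-ranks in `K` under distinct values. -/
theorem corank_monotone_in_rank {m : ℕ} (n : Fin m → ℕ) (L : ∀ t, Fin (n t) → ℝ)
    (hmono : ∀ t, Monotone (L t))
    (hinj : Function.Injective (fun x : Σ t : Fin m, Fin (n t) => L x.1 x.2))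
    (K K' : ℕ) (hKK' : K ≤ K') (i j : Fin m → ℕ)
    (hile : ∀ t, i t ≤ n t) (hjle : ∀ t, j t ≤ n t)
    (hisum : ∑ t, i t = K) (hjsum : ∑ t, j t = K')
    (hico : (⨆ t, lcut n L i t) ≤ ⨅ t, rcut n L i t)
    (hjco : (⨆ t, lcut n L j t) ≤ ⨅ t, rcut n L j t) :
    ∀ t, i t ≤ j t := by
  intro t0
  by_contra hlt
  push_neg at hlt
  -- find s with i s < j s
  have hex : ∃ s, i s < j s := by
    by_contra hno
    push_neg at hno
    have : ∑ s, j s < ∑ s, i s :=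
      Finset.sum_lt_sum (fun s _ => hno s) ⟨t0, Finset.mem_univ t0, hlt⟩
    omega
  obtain ⟨s, hs⟩ := hex
  have hst : s ≠ t0 := by intro h; subst h; omega
  -- boundary values
  have hit0 : 0 < i t0 ∧ i t0 ≤ n t0 := ⟨by omega, hile t0⟩
  have hjt0 : j t0 < n t0 := by have := hile t0; omega
  have hjs : 0 < j s ∧ j s ≤ n s := ⟨by omega, hjle s⟩
  have his : i s < n s := by have := hjle s; omega
  have h1 : lcut n L i t0 ≤ rcut n L i s :=
    le_trans (le_iSup _ t0) (le_trans hico (iInf_le _ s))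
  have h2 : lcut n L j s ≤ rcut n L j t0 :=
    le_trans (le_iSup _ s) (le_trans hjco (iInf_le _ t0))
  rw [lcut, rcut, dif_pos hit0, dif_pos his] at h1
  rw [lcut, rcut, dif_pos hjs, dif_pos hjt0] at h2
  have h1' : L t0 ⟨i t0 - 1, by omega⟩ ≤ L s ⟨i s, his⟩ := by exact_mod_cast h1
  have h2' : L s ⟨j s - 1, by omega⟩ ≤ L t0 ⟨j t0, hjt0⟩ := by exact_mod_cast h2
  have h3 : L s ⟨i s, his⟩ ≤ L s ⟨j s - 1, by omega⟩ :=
    hmono s (by simp [Fin.le_def]; omega)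
  have h4 : L t0 ⟨j t0, hjt0⟩ ≤ L t0 ⟨i t0 - 1, by omega⟩ :=
    hmono t0 (by simp [Fin.le_def]; omega)
  have heq : L s ⟨i s, his⟩ = L t0 ⟨j t0, hjt0⟩ := le_antisymm (h3.trans h2') (h4.trans h1')
  have := hinj (a₁ := ⟨s, ⟨i s, his⟩⟩) (a₂ := ⟨t0, ⟨j t0, hjt0⟩⟩) heq
  exact hst (congrArg Sigma.fst this)
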